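/- Let d ≥ 2 and let q ≡ 1 (mod d) be a prime power. Let λ ∈ F_q^* and let A ⊆ F_q^* be a set such that for all a, b ∈ A (including a = b), the element ab + λ is either 0 or a d-th power in F_q^*. Then |A| ≤ (√(4q−3) + 1)/2. -/

import Mathlib

open Finset Complex

section Aux

variable {F : Type*} [Field F] [Fintype F] [DecidableEq F]

/-- character values at nonzero arguments are unimodular. -/
lemma mulchar_mul_conj {χ : MulChar F ℂ} {y : F} (hy : y ≠ 0) :
    χ y * (starRingEnd ℂ) (χ y) = 1 := by
  have h1 : (χ y) ^ (Fintype.card F - 1) = 1 := by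
    rw [← map_pow, FiniteField.pow_card_sub_one_eq_one y hy, map_one]
  have hcard : Fintype.card F - 1 ≠ 0 := by
    have : 1 < Fintype.card F := Fintype.one_lt_card
    omega
  have hnorm : ‖χ y‖ = 1 := by
    have h2 : ‖χ y‖ ^ (Fintype.card F - 1) = 1 := by
      rw [← norm_pow, h1, norm_one]
    have h3 : (0:ℝ) ≤ ‖χ y‖ := norm_nonneg _
    rcases lt_trichotomy ‖χ y‖ 1 with h | h | h
    · have hlt : ‖χ y‖ ^ (Fintype.card F - 1) < 1 := pow_lt_one₀ h3 h hcard
      rw [h2] at hlt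
      exact absurd hlt (lt_irrefl 1)
    · exact h
    · have hgt : 1 < ‖χ y‖ ^ (Fintype.card F - 1) := one_lt_pow₀ h hcard
      rw [h2] at hgt
      exact absurd hgt (lt_irrefl 1)
  rw [Complex.mul_conj, Complex.normSq_eq_norm_sq]
  norm_cast
  rw [hnorm]
  norm_num

lemma mulchar_conj_eq_inv {χ : MulChar F ℂ} {y : F} (hy : y ≠ 0) :
    (starRingEnd ℂ) (χ y) = (χ y)⁻¹ :=
  (inv_eq_of_mul_eq_one_right (mulchar_mul_conj hy)).symm

lemma mulchar_map_inv (χ : MulChar F ℂ) (y : F) : χ y⁻¹ = (χ y)⁻¹ := by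
  rcases eq_or_ne y 0 with rfl | hy
  · simp [MulChar.map_zero]
  · refine eq_inv_of_mul_eq_one_right ?_
    rw [← map_mul, mul_inv_cancel₀ hy, map_one]

/-- Complete correlation sum: for `δ ≠ 0` and nontrivial `χ`,
`∑ v, χ (v + δ) * conj (χ v) = -1`. -/
lemma mulchar_correlation {χ : MulChar F ℂ} (hχ : χ ≠ 1) {δ : F} (hδ : δ ≠ 0) :
    ∑ v : F, χ (v + δ) * (starRingEnd ℂ) (χ v) = -1 := by
  have step1 : ∑ v ∈ Finset.univ.erase (0 : F), χ (v + δ) * (starRingEnd ℂ) (χ v)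
      = ∑ v : F, χ (v + δ) * (starRingEnd ℂ) (χ v) := by
    apply Finset.sum_erase
    simp [MulChar.map_zero]
  rw [← step1]
  have step2 : ∑ v ∈ Finset.univ.erase (0 : F), χ (v + δ) * (starRingEnd ℂ) (χ v)
      = ∑ w ∈ Finset.univ.erase (1 : F), χ w := by
    refine Finset.sum_bij' (fun v _ => 1 + δ * v⁻¹) (fun w _ => δ * (w - 1)⁻¹) ?_ ?_ ?_ ?_ ?_
    · intro v hv
      have hv0 : v ≠ 0 := Finset.ne_of_mem_erase hv
      simp only [Finset.mem_erase, Finset.mem_univ, and_true]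
      intro h
      have h2 : δ * v⁻¹ = 0 := by linear_combination h
      rcases mul_eq_zero.mp h2 with h' | h'
      · exact hδ h'
      · exact hv0 (inv_eq_zero.mp h')
    · intro w hw
      have hw1 : w ≠ 1 := Finset.ne_of_mem_erase hw
      simp only [Finset.mem_erase, Finset.mem_univ, and_true]
      intro h
      rcases mul_eq_zero.mp h with h' | h'
      · exact hδ h'
      · exact hw1 (sub_ne_zero.mpr hw1 (inv_eq_zero.mp h')).elim
    · intro v hv
      have hv0 : v ≠ 0 := Finset.ne_of_mem_erase hv
      have hne : δ * v⁻¹ ≠ 0 := mul_ne_zero hδ (inv_ne_zero hv0)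
      field_simp
      simp [hδ]
    · intro w hw
      have hw1 : w ≠ 1 := Finset.ne_of_mem_erase hw
      have hne : w - 1 ≠ 0 := sub_ne_zero.mpr hw1
      field_simp
      ring
    · intro v hv
      have hv0 : v ≠ 0 := Finset.ne_of_mem_erase hv
      rw [mulchar_conj_eq_inv hv0, ← mulchar_map_inv, ← map_mul]
      congr 1
      field_simp
  rw [step2]
  have step3 : ∑ w ∈ Finset.univ.erase (1 : F), χ w
      = (∑ w : F, χ w) - χ 1 := Finset.sum_erase_eq_sub (Finset.mem_univ 1)
  rw [step3, MulChar.sum_eq_zero_of_ne_one hχ, map_one]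
  ring

end Aux

/-- trivial upper bound for strong Diophantine tuples over finite fields. -/
theorem strong_diophantine_trivial_bound
    (d : ℕ) (hd : 2 ≤ d) (F : Type*) [Field F] [Fintype F]
    (hq : Fintype.card F % d = 1)
    (lam : F) (hlam : lam ≠ 0)
    (A : Finset F) (hA0 : (0 : F) ∉ A)
    (hprop : ∀ a ∈ A, ∀ b ∈ A,
      a * b + lam = 0 ∨ ∃ x : F, x ≠ 0 ∧ x ^ d = a * b + lam) :
    (A.card : ℝ) ≤ (Real.sqrt (4 * (Fintype.card F : ℝ) - 3) + 1) / 2 := by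
  classical
  set q : ℕ := Fintype.card F with hqdef
  set n : ℕ := A.card with hndef
  have hq1 : 1 < q := Fintype.one_lt_card
  have hdvd : d ∣ q - 1 := by
    have h := Nat.dvd_sub_mod (n := d) q
    rwa [hq] at h
  have hd0 : d ≠ 0 := by omega
  obtain ⟨χ, hχord⟩ := MulChar.exists_mulChar_orderOf F hdvd
    (Complex.isPrimitiveRoot_exp d hd0)
  have hχ1 : χ ≠ 1 := by
    intro h
    rw [h, orderOf_one] at hχord
    omega
  have hχd : χ ^ d = 1 := by rw [← hχord]; exact pow_orderOf_eq_one χ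
  have hpow1 : ∀ x : F, x ≠ 0 → χ (x ^ d) = 1 := by
    intro x hx
    rw [map_pow, ← MulChar.pow_apply' χ hd0, hχd, MulChar.one_apply (IsUnit.mk0 x hx)]
  set T : F → ℂ := fun c => ∑ b ∈ A, χ (b - c) with hTdef
  -- inner sums
  have inner : ∀ b ∈ A, ∀ b' ∈ A,
      ∑ c : F, χ (b - c) * (starRingEnd ℂ) (χ (b' - c))
        = -1 + (if b = b' then (q : ℂ) else 0) := by
    intro b _ b' _
    rcases eq_or_ne b b' with rfl | hne
    · rw [if_pos rfl]
      have he : ∑ c ∈ Finset.univ.erase b, χ (b - c) * (starRingEnd ℂ) (χ (b - c))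
          = ∑ c : F, χ (b - c) * (starRingEnd ℂ) (χ (b - c)) := by
        apply Finset.sum_erase
        simp [MulChar.map_zero]
      rw [← he]
      have hval : ∀ c ∈ Finset.univ.erase b,
          χ (b - c) * (starRingEnd ℂ) (χ (b - c)) = 1 := by
        intro c hc
        exact mulchar_mul_conj (sub_ne_zero.mpr (Finset.ne_of_mem_erase hc).symm)
      rw [Finset.sum_congr rfl hval, Finset.sum_const, Finset.card_erase_of_mem (Finset.mem_univ b),
        Finset.card_univ, nsmul_eq_mul]
      have : ((q - 1 : ℕ) : ℂ) = (q : ℂ) - 1 := by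
        push_cast [Nat.cast_sub hq1.le]
        ring
      rw [← hqdef, this]
      ring
    · simp only [if_neg hne]
      have hsub : ∑ c : F, χ (b - c) * (starRingEnd ℂ) (χ (b' - c))
          = ∑ v : F, χ (v + (b - b')) * (starRingEnd ℂ) (χ v) := by
        rw [← Equiv.sum_comp (Equiv.subLeft b') (fun c => χ (b - c) * (starRingEnd ℂ) (χ (b' - c)))]
        apply Finset.sum_congr rfl
        intro v _
        simp only [Equiv.subLeft_apply]
        congr 2 <;> ring
      rw [hsub, mulchar_correlation hχ1 (sub_ne_zero.mpr hne)]
      ring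
  -- global identity
  have global : ∑ c : F, T c * (starRingEnd ℂ) (T c) = (n : ℂ) * q - (n : ℂ) ^ 2 := by
    have expand : ∀ c : F, T c * (starRingEnd ℂ) (T c)
        = ∑ b ∈ A, ∑ b' ∈ A, χ (b - c) * (starRingEnd ℂ) (χ (b' - c)) := by
      intro c
      rw [hTdef]
      simp only
      rw [map_sum, Finset.sum_mul_sum]
    calc ∑ c : F, T c * (starRingEnd ℂ) (T c)
        = ∑ c : F, ∑ b ∈ A, ∑ b' ∈ A, χ (b - c) * (starRingEnd ℂ) (χ (b' - c)) :=
          Finset.sum_congr rfl fun c _ => expand c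
      _ = ∑ b ∈ A, ∑ c : F, ∑ b' ∈ A, χ (b - c) * (starRingEnd ℂ) (χ (b' - c)) :=
          Finset.sum_comm
      _ = ∑ b ∈ A, ∑ b' ∈ A, ∑ c : F, χ (b - c) * (starRingEnd ℂ) (χ (b' - c)) :=
          Finset.sum_congr rfl fun b _ => Finset.sum_comm
      _ = ∑ b ∈ A, ∑ b' ∈ A, (-1 + (if b = b' then (q : ℂ) else 0)) :=
          Finset.sum_congr rfl fun b hb => Finset.sum_congr rfl fun b' hb' =>
            inner b hb b' hb'
      _ = ∑ _b ∈ A, ((n : ℂ) * (-1) + q) := Finset.sum_congr rfl (fun b hb => by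
            rw [Finset.sum_add_distrib, Finset.sum_const, Finset.sum_ite_eq A b (fun _ => (q:ℂ)),
              if_pos hb, ← hndef, nsmul_eq_mul])
      _ = (n : ℂ) * ((n : ℂ) * (-1) + q) := by
            rw [Finset.sum_const, ← hndef, nsmul_eq_mul]
      _ = (n : ℂ) * q - (n : ℂ) ^ 2 := by ring
  -- real version
  have globalR : ∑ c : F, Complex.normSq (T c) = (n : ℝ) * q - (n : ℝ) ^ 2 := by
    have : ((∑ c : F, Complex.normSq (T c) : ℝ) : ℂ) = (((n : ℝ) * q - (n : ℝ) ^ 2 : ℝ) : ℂ) := by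
      push_cast
      rw [← global]
      apply Finset.sum_congr rfl
      intro c _
      rw [Complex.mul_conj]
    exact_mod_cast this
  -- local lower bound
  have localB : ∀ a ∈ A, ((n : ℝ) - 1) ^ 2 ≤ Complex.normSq (T (-lam * a⁻¹)) := by
    intro a ha
    have ha0 : a ≠ 0 := fun h => hA0 (h ▸ ha)
    set k : ℕ := (A.filter (fun b => a * b + lam ≠ 0)).card with hkdef
    have hTval : T (-lam * a⁻¹) = (k : ℂ) * (χ a)⁻¹ := by
      rw [hTdef]
      simp only
      have hterm : ∀ b ∈ A, χ (b - (-lam * a⁻¹))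
          = if a * b + lam ≠ 0 then (χ a)⁻¹ else 0 := by
        intro b _
        have hbc : b - (-lam * a⁻¹) = (a * b + lam) * a⁻¹ := by
          field_simp
          ring
        rcases eq_or_ne (a * b + lam) 0 with h0 | h0
        · rw [if_neg (not_not.mpr h0), hbc, h0, zero_mul, MulChar.map_zero]
        · rw [if_pos h0, hbc, map_mul, mulchar_map_inv]
          rcases hprop a ha b ‹b ∈ A› with h | ⟨x, hx0, hxd⟩
          · exact absurd h h0
          · rw [← hxd, hpow1 x hx0, one_mul]
      rw [Finset.sum_congr rfl hterm, Finset.sum_ite, Finset.sum_const, Finset.sum_const_zero,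
        add_zero, nsmul_eq_mul, hkdef]
    have hk : n - 1 ≤ k := by
      have hsplit := Finset.card_filter_add_card_filter_not
        (s := A) (p := fun b => a * b + lam ≠ 0)
      have hone : (A.filter (fun b => ¬(a * b + lam ≠ 0))).card ≤ 1 := by
        apply Finset.card_le_one.mpr
        intro b hb b' hb'
        simp only [Finset.mem_filter, not_not] at hb hb'
        have h1 : a * b = a * b' := by
          have := hb.2
          have := hb'.2
          linear_combination hb.2 - hb'.2
        exact mul_left_cancel₀ ha0 h1
      omega
    have hnormχ : Complex.normSq ((χ a)⁻¹) = 1 := by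
      have h1 : χ a * (starRingEnd ℂ) (χ a) = 1 := mulchar_mul_conj ha0
      have h2 : ((Complex.normSq (χ a) : ℝ) : ℂ) = 1 := by rw [← Complex.mul_conj, h1]
      have h3 : Complex.normSq (χ a) = 1 := by exact_mod_cast h2
      rw [Complex.normSq_inv, h3, inv_one]
    rw [hTval, Complex.normSq_mul, hnormχ, mul_one, Complex.normSq_natCast]
    have hn1 : 1 ≤ n := by
      rw [hndef]
      exact Finset.card_pos.mpr ⟨a, ha⟩
    have hkR : (n : ℝ) - 1 ≤ (k : ℝ) := by
      have h' : ((n - 1 : ℕ) : ℝ) ≤ (k : ℝ) := by exact_mod_cast hk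
      rw [Nat.cast_sub hn1] at h'
      exact_mod_cast h'
    have h1 : (0:ℝ) ≤ (k:ℝ) := Nat.cast_nonneg k
    have h2 : (0:ℝ) ≤ (n:ℝ) - 1 := by
      have : (1:ℝ) ≤ (n:ℝ) := by exact_mod_cast hn1
      linarith
    nlinarith
  -- sum over the image
  set SB : Finset F := A.image (fun a => -lam * a⁻¹) with hSBdef
  have hinj : Set.InjOn (fun a => -lam * a⁻¹) A := by
    intro a ha b hb h
    simp only at h
    have ha0 : a ≠ 0 := fun hh => hA0 (hh ▸ ha)
    have hb0 : b ≠ 0 := fun hh => hA0 (hh ▸ hb)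
    have : a⁻¹ = b⁻¹ := mul_left_cancel₀ (neg_ne_zero.mpr hlam) h
    exact inv_injective this
  have hsum1 : ∑ c ∈ SB, Complex.normSq (T c)
      = ∑ a ∈ A, Complex.normSq (T (-lam * a⁻¹)) := by
    rw [hSBdef]
    exact Finset.sum_image (fun a ha b hb h => hinj ha hb h)
  have hlower : (n : ℝ) * ((n : ℝ) - 1) ^ 2 ≤ ∑ c ∈ SB, Complex.normSq (T c) := by
    rw [hsum1]
    calc (n : ℝ) * ((n : ℝ) - 1) ^ 2 = ∑ _a ∈ A, ((n : ℝ) - 1) ^ 2 := by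
          rw [Finset.sum_const, ← hndef, nsmul_eq_mul]
      _ ≤ ∑ a ∈ A, Complex.normSq (T (-lam * a⁻¹)) :=
          Finset.sum_le_sum localB
  have hupper : ∑ c ∈ SB, Complex.normSq (T c) ≤ (n : ℝ) * q - (n : ℝ) ^ 2 := by
    rw [← globalR]
    apply Finset.sum_le_sum_of_subset_of_nonneg (Finset.subset_univ SB)
    intro c _ _
    exact Complex.normSq_nonneg _
  have hmain : (n : ℝ) * ((n : ℝ) - 1) ^ 2 ≤ (n : ℝ) * q - (n : ℝ) ^ 2 :=
    hlower.trans hupper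
  -- conclude
  rcases Nat.eq_zero_or_pos n with h0 | h0
  · rw [h0]
    simp only [Nat.cast_zero]
    have : (0:ℝ) ≤ Real.sqrt (4 * (q : ℝ) - 3) := Real.sqrt_nonneg _
    linarith
  · have hn1 : (1 : ℝ) ≤ (n : ℝ) := by exact_mod_cast h0
    have hkey : ((n : ℝ) - 1) ^ 2 + (n : ℝ) ≤ (q : ℝ) := by
      have hnpos : (0:ℝ) < (n:ℝ) := by linarith
      nlinarith
    have hsq : (2 * (n : ℝ) - 1) ^ 2 ≤ 4 * (q : ℝ) - 3 := by nlinarith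
    have h2n : (0:ℝ) ≤ 2 * (n : ℝ) - 1 := by linarith
    have : 2 * (n : ℝ) - 1 ≤ Real.sqrt (4 * (q : ℝ) - 3) := by
      rw [← Real.sqrt_sq h2n]
      exact Real.sqrt_le_sqrt hsq
    linarith
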